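/- Let φ : [0, T) → ℝ be locally Lipschitz with φ(0) ≥ 0 and suppose there exists c₀ > 0 such that for almost every t where φ(t) > 0 one has φ'(t) ≤ −c₀·φ(t)³. Then φ(t) ≤ (2c₀t)^{-1/2} for all t ∈ (0, T). -/

import Mathlib

open MeasureTheory Set intervalIntegral

/-- FTC for Lipschitz functions: `f b - f a = ∫ x in a..b, deriv f x`. -/
theorem lipschitz_integral_deriv {f : ℝ → ℝ} {L : NNReal} (hf : LipschitzWith L f)
    {a b : ℝ} (hab : a ≤ b) : f b - f a = ∫ x in a..b, deriv f x := by
  have hcont : Continuous f := hf.continuous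
  have hintf : ∀ u v : ℝ, IntervalIntegrable f volume u v :=
    fun u v => hcont.intervalIntegrable u v
  set c : ℕ → ℝ := fun n => ((n : ℝ) + 1)⁻¹ with hc
  have hcpos : ∀ n, 0 < c n := fun n => by positivity
  have hc0 : Filter.Tendsto c Filter.atTop (nhds 0) :=
    tendsto_one_div_add_atTop_nhds_zero_nat.congr (by intro n; simp [hc, one_div])
  set g : ℕ → ℝ → ℝ := fun n x => (f (x + c n) - f x) / c n with hg
  -- pointwise a.e. convergence
  have hae : ∀ᵐ x : ℝ ∂(volume.restrict (Set.Ioc a b)),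
      Filter.Tendsto (fun n => g n x) Filter.atTop (nhds (deriv f x)) := by
    have h1 : ∀ᵐ x : ℝ, DifferentiableAt ℝ f x := hf.ae_differentiableAt
    refine (h1.filter_mono (MeasureTheory.ae_mono Measure.restrict_le_self)).mono ?_
    intro x hx
    have hd := hx.hasDerivAt
    rw [hasDerivAt_iff_tendsto_slope] at hd
    have hseq : Filter.Tendsto (fun n => x + c n) Filter.atTop (nhdsWithin x {x}ᶜ) := by
      rw [tendsto_nhdsWithin_iff]
      constructor
      · simpa using tendsto_const_nhds.add hc0
      · exact Filter.Eventually.of_forall fun n => by simp [(hcpos n).ne']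
    have := hd.comp hseq
    refine this.congr fun n => ?_
    simp [slope_def_field, hg]
  -- dominated convergence
  have hbound : ∀ n, ∀ᵐ x : ℝ ∂(volume.restrict (Set.Ioc a b)), ‖g n x‖ ≤ (L : ℝ) := by
    intro n
    refine Filter.Eventually.of_forall fun x => ?_
    have h1 : |f (x + c n) - f x| ≤ (L : ℝ) * |x + c n - x| := by
      simpa [Real.dist_eq] using hf.dist_le_mul (x + c n) x
    rw [hg]
    simp only [Real.norm_eq_abs, abs_div, abs_of_pos (hcpos n)]
    rw [div_le_iff₀ (hcpos n)]
    simpa [abs_of_pos (hcpos n)] using h1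
  have hmeas : ∀ n, AEStronglyMeasurable (g n) (volume.restrict (Set.Ioc a b)) :=
    fun n => (((hcont.comp (continuous_id.add continuous_const)).sub hcont).div_const _).aestronglyMeasurable
  have hDCT := MeasureTheory.tendsto_integral_of_dominated_convergence
      (μ := volume.restrict (Set.Ioc a b)) (F := g) (f := deriv f)
      (fun _ => (L : ℝ)) hmeas (integrable_const _) hbound hae
  -- identify the integrals of g n
  have hInt : ∀ n, ∫ x in Set.Ioc a b, g n x =
      ((∫ x in b..(b + c n), f x) - ∫ x in a..(a + c n), f x) / c n := by
    intro n
    have h1 : ∫ x in Set.Ioc a b, g n x = ∫ x in a..b, g n x := by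
      rw [intervalIntegral.integral_of_le hab]
    rw [h1, hg]
    simp only
    rw [intervalIntegral.integral_div]
    congr 1
    have h2 : IntervalIntegrable (fun x => f (x + c n)) volume a b :=
      (hcont.comp (continuous_id.add continuous_const)).intervalIntegrable a b
    rw [intervalIntegral.integral_sub h2 (hintf a b)]
    rw [intervalIntegral.integral_comp_add_right f (c n)]
    have e1 : ∫ x in a..(b + c n), f x = (∫ x in a..b, f x) + ∫ x in b..(b + c n), f x :=
      (intervalIntegral.integral_add_adjacent_intervals (hintf a b) (hintf _ _)).symm
    have e2 : ∫ x in a..(b + c n), f x =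
        (∫ x in a..(a + c n), f x) + ∫ x in (a + c n)..(b + c n), f x :=
      (intervalIntegral.integral_add_adjacent_intervals (hintf _ _) (hintf _ _)).symm
    have := e1.symm.trans e2
    linarith [this]
  -- the right side tends to f b - f a
  have hlim : Filter.Tendsto (fun n => ∫ x in Set.Ioc a b, g n x) Filter.atTop
      (nhds (f b - f a)) := by
    have hb' : Filter.Tendsto (fun n => (∫ x in b..(b + c n), f x) / c n)
        Filter.atTop (nhds (f b)) := by
      have hF : HasDerivAt (fun u => ∫ x in b..u, f x) (f b) b :=
        intervalIntegral.integral_hasDerivAt_right (hintf b b)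
          hcont.aestronglyMeasurable.stronglyMeasurableAtFilter hcont.continuousAt
      rw [hasDerivAt_iff_tendsto_slope] at hF
      have hseq : Filter.Tendsto (fun n => b + c n) Filter.atTop (nhdsWithin b {b}ᶜ) := by
        rw [tendsto_nhdsWithin_iff]
        constructor
        · simpa using tendsto_const_nhds.add hc0
        · exact Filter.Eventually.of_forall fun n => by simp [(hcpos n).ne']
      have := hF.comp hseq
      refine this.congr fun n => ?_
      simp [slope_def_field]
    have ha' : Filter.Tendsto (fun n => (∫ x in a..(a + c n), f x) / c n)
        Filter.atTop (nhds (f a)) := by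
      have hF : HasDerivAt (fun u => ∫ x in a..u, f x) (f a) a :=
        intervalIntegral.integral_hasDerivAt_right (hintf a a)
          hcont.aestronglyMeasurable.stronglyMeasurableAtFilter hcont.continuousAt
      rw [hasDerivAt_iff_tendsto_slope] at hF
      have hseq : Filter.Tendsto (fun n => a + c n) Filter.atTop (nhdsWithin a {a}ᶜ) := by
        rw [tendsto_nhdsWithin_iff]
        constructor
        · simpa using tendsto_const_nhds.add hc0
        · exact Filter.Eventually.of_forall fun n => by simp [(hcpos n).ne']
      have := hF.comp hseq
      refine this.congr fun n => ?_
      simp [slope_def_field]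
    have := hb'.sub ha'
    refine this.congr fun n => ?_
    rw [hInt n, sub_div]
  have : f b - f a = ∫ x in Set.Ioc a b, deriv f x :=
    tendsto_nhds_unique hlim hDCT
  rw [this, intervalIntegral.integral_of_le hab]
open MeasureTheory Set

theorem lipschitz_sub_ge {f : ℝ → ℝ} {L : NNReal} (hf : LipschitzWith L f)
    {a b m : ℝ} (hab : a ≤ b)
    (hm : ∀ᵐ x ∂(volume.restrict (Set.Ioo a b)), m ≤ deriv f x) :
    m * (b - a) ≤ f b - f a := by
  have hA : f b - f a = ∫ x in a..b, deriv f x := lipschitz_integral_deriv hf hab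
  rw [hA, intervalIntegral.integral_of_le hab]
  have hm' : ∀ᵐ x ∂(volume.restrict (Set.Ioc a b)), m ≤ deriv f x := by
    rwa [← MeasureTheory.restrict_Ioo_eq_restrict_Ioc]
  have hbd : ∀ x, ‖deriv f x‖ ≤ (L : ℝ) := by
    intro x
    by_cases hx : DifferentiableAt ℝ f x
    · exact norm_deriv_le_of_lipschitz hf
    · simp [deriv_zero_of_not_differentiableAt hx]
  have hint : IntegrableOn (deriv f) (Set.Ioc a b) volume := by
    refine Integrable.mono' (integrable_const (L : ℝ))
      ((measurable_deriv f).aestronglyMeasurable) ?_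
    exact Filter.Eventually.of_forall hbd
  calc m * (b - a) = ∫ _x in Set.Ioc a b, m := by
        simp [Real.volume_Ioc, ENNReal.toReal_ofReal (sub_nonneg.2 hab), mul_comm, hab]
      _ ≤ ∫ x in Set.Ioc a b, deriv f x :=
        setIntegral_mono_ae_restrict (integrable_const m) hint hm'
open MeasureTheory Set

theorem step_lemma {φ : ℝ → ℝ} {c₀ s t : ℝ} {K : NNReal} (hc₀ : 0 < c₀)
    (hlipK : LipschitzOnWith K φ (Icc s t)) (hst : s ≤ t)
    (hpos : ∀ u ∈ Icc s t, 0 < φ u)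
    (hode : ∀ᵐ x ∂(volume.restrict (Ioo s t)),
      DifferentiableAt ℝ φ x ∧ deriv φ x ≤ -c₀ * φ x ^ 3) :
    2 * c₀ * (t - s) + (φ s ^ 2)⁻¹ ≤ (φ t ^ 2)⁻¹ := by
  -- positive lower bound for φ on [s,t]
  obtain ⟨u₀, hu₀, hmin⟩ := isCompact_Icc.exists_isMinOn (nonempty_Icc.2 hst)
    hlipK.continuousOn
  set δ : ℝ := φ u₀ with hδdef
  have hδpos : 0 < δ := hpos u₀ hu₀
  have hδle : ∀ u ∈ Icc s t, δ ≤ φ u := fun u hu => hmin hu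
  -- ψ₀ = 1/φ² is Lipschitz on [s,t]
  set ψ₀ : ℝ → ℝ := fun x => (φ x ^ 2)⁻¹ with hψ₀
  have key : ∀ x y : ℝ, δ ≤ x → δ ≤ y → |(x ^ 2)⁻¹ - (y ^ 2)⁻¹| ≤ 2 / δ ^ 3 * |x - y| := by
    intro x y hx hy
    have hx0 : 0 < x := lt_of_lt_of_le hδpos hx
    have hy0 : 0 < y := lt_of_lt_of_le hδpos hy
    have e : (x ^ 2)⁻¹ - (y ^ 2)⁻¹ = (y - x) * (y + x) / (x ^ 2 * y ^ 2) := by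
      field_simp; ring
    rw [e, abs_div, abs_mul, abs_of_pos (by positivity : (0:ℝ) < x ^ 2 * y ^ 2),
      div_le_iff₀ (by positivity)]
    have h1 : |y - x| = |x - y| := abs_sub_comm y x
    have h2 : |y + x| = y + x := abs_of_pos (by positivity)
    rw [h1, h2]
    have hb1 : δ * δ ≤ x * x := mul_le_mul hx hx hδpos.le hx0.le
    have hb2 : δ * δ * δ ≤ x * x * y := mul_le_mul hb1 hy hδpos.le (by positivity)
    have hb3 : δ * δ * δ ≤ x * y * y :=
      mul_le_mul (mul_le_mul hx hy hδpos.le hx0.le) hy hδpos.le (by positivity)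
    have h3 : (y + x) * δ ^ 3 ≤ 2 * (x ^ 2 * y ^ 2) := by
      nlinarith [mul_le_mul_of_nonneg_left hb2 hy0.le, mul_le_mul_of_nonneg_left hb3 hx0.le]
    have h4 : |x - y| * ((y + x) * δ ^ 3) ≤ |x - y| * (2 * (x ^ 2 * y ^ 2)) :=
      mul_le_mul_of_nonneg_left h3 (abs_nonneg _)
    have h5 : 0 < δ ^ 3 := by positivity
    rw [div_mul_eq_mul_div, div_mul_eq_mul_div, le_div_iff₀ h5]
    nlinarith [h4]
  have hψlipOn : LipschitzOnWith (Real.toNNReal (2 / δ ^ 3 * K)) ψ₀ (Icc s t) := by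
    rw [lipschitzOnWith_iff_dist_le_mul]
    intro x hx y hy
    have hK := (lipschitzOnWith_iff_dist_le_mul.1 hlipK) x hx y hy
    rw [Real.dist_eq, Real.dist_eq] at *
    have h1 : |ψ₀ x - ψ₀ y| ≤ 2 / δ ^ 3 * |φ x - φ y| :=
      key (φ x) (φ y) (hδle x hx) (hδle y hy)
    have h2 : Real.toNNReal (2 / δ ^ 3 * K) = (2 / δ ^ 3 * K : ℝ) := by
      rw [Real.coe_toNNReal]; positivity
    rw [h2]
    calc |ψ₀ x - ψ₀ y| ≤ 2 / δ ^ 3 * |φ x - φ y| := h1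
      _ ≤ 2 / δ ^ 3 * ((K : ℝ) * |x - y|) := by
          apply mul_le_mul_of_nonneg_left hK (by positivity)
      _ = 2 / δ ^ 3 * K * |x - y| := by ring
  obtain ⟨ψ, hψlip, hψeq⟩ := hψlipOn.extend_real
  -- a.e. derivative lower bound for ψ on (s,t)
  have hder : ∀ᵐ x ∂(volume.restrict (Ioo s t)), 2 * c₀ ≤ deriv ψ x := by
    filter_upwards [hode, ae_restrict_mem measurableSet_Ioo] with x hx hxI
    obtain ⟨hdiff, hd⟩ := hx
    have hφx : 0 < φ x := hpos x (Ioo_subset_Icc_self hxI)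
    have heq : ψ =ᶠ[nhds x] ψ₀ := by
      filter_upwards [Ioo_mem_nhds hxI.1 hxI.2] with y hy
      exact (hψeq (Ioo_subset_Icc_self hy)).symm
    rw [heq.deriv_eq]
    have h2 : HasDerivAt (fun y => (φ y ^ 2)⁻¹)
        (-((2 : ℕ) * φ x ^ (2 - 1) * deriv φ x) / (φ x ^ 2) ^ 2) x :=
      (hdiff.hasDerivAt.pow 2).inv (pow_ne_zero 2 hφx.ne')
    rw [h2.deriv]
    rw [le_div_iff₀ (by positivity)]
    have := mul_le_mul_of_nonneg_left hd (by positivity : (0:ℝ) ≤ 2 * φ x)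
    norm_num
    nlinarith [this]
  have := lipschitz_sub_ge hψlip hst hder
  have es : ψ s = ψ₀ s := (hψeq (left_mem_Icc.2 hst)).symm
  have et : ψ t = ψ₀ t := (hψeq (right_mem_Icc.2 hst)).symm
  rw [es, et] at this
  simp only [hψ₀] at this
  linarith
open MeasureTheory Set ENNReal

theorem stmt_8 (T : ℝ≥0∞) (hT : 0 < T) (φ : ℝ → ℝ) (c₀ : ℝ) (hc₀ : 0 < c₀)
    (hlip : ∀ K : Set ℝ, IsCompact K → K ⊆ {t : ℝ | 0 ≤ t ∧ ENNReal.ofReal t < T} →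
      ∃ C : NNReal, LipschitzOnWith C φ K)
    (h0 : 0 ≤ φ 0)
    (hode : ∀ᵐ t ∂(volume.restrict {t : ℝ | 0 ≤ t ∧ ENNReal.ofReal t < T}),
      DifferentiableAt ℝ φ t ∧ (0 < φ t → deriv φ t ≤ -c₀ * φ t ^ 3)) :
    ∀ t : ℝ, 0 < t → ENNReal.ofReal t < T →
      φ t ≤ (2 * c₀ * t) ^ (-(1 / 2) : ℝ) := by
  intro t ht htT
  have hA : (0:ℝ) < 2 * c₀ * t := by positivity
  by_cases hφt : 0 < φ t
  swap
  · have : (0:ℝ) < (2 * c₀ * t) ^ (-(1 / 2) : ℝ) := Real.rpow_pos_of_pos hA _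
    linarith [not_lt.1 hφt]
  have hsub : Icc 0 t ⊆ {x : ℝ | 0 ≤ x ∧ ENNReal.ofReal x < T} :=
    fun u hu => ⟨hu.1, lt_of_le_of_lt (ENNReal.ofReal_le_ofReal hu.2) htT⟩
  obtain ⟨K, hK⟩ := hlip (Icc 0 t) isCompact_Icc hsub
  have hcont : ContinuousOn φ (Icc 0 t) := hK.continuousOn
  -- main step
  have main : ∀ s : ℝ, 0 ≤ s → s ≤ t → (∀ u ∈ Icc s t, 0 < φ u) →
      2 * c₀ * (t - s) + (φ s ^ 2)⁻¹ ≤ (φ t ^ 2)⁻¹ := by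
    intro s hs0 hst hposI
    have hlip' : LipschitzOnWith K φ (Icc s t) := hK.mono (Icc_subset_Icc hs0 le_rfl)
    have hsub2 : Ioo s t ⊆ {x : ℝ | 0 ≤ x ∧ ENNReal.ofReal x < T} :=
      fun u hu => hsub ⟨hs0.trans hu.1.le, hu.2.le⟩
    have hode2 := ae_restrict_of_ae_restrict_of_subset hsub2 hode
    have hode' : ∀ᵐ x ∂(volume.restrict (Ioo s t)),
        DifferentiableAt ℝ φ x ∧ deriv φ x ≤ -c₀ * φ x ^ 3 := by
      filter_upwards [hode2, ae_restrict_mem measurableSet_Ioo] with x hx hxI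
      exact ⟨hx.1, hx.2 (hposI x (Ioo_subset_Icc_self hxI))⟩
    exact step_lemma hc₀ hlip' hst hposI hode'
  by_cases hall : ∀ u ∈ Icc 0 t, 0 < φ u
  · have h := main 0 le_rfl ht.le hall
    have hinv : (0:ℝ) ≤ (φ 0 ^ 2)⁻¹ := by positivity
    have h2 : 2 * c₀ * t ≤ (φ t ^ 2)⁻¹ := by linarith
    -- conclude via square roots
    have h3 : φ t ^ 2 * (2 * c₀ * t) ≤ 1 := by
      have := mul_le_mul_of_nonneg_left h2 (by positivity : (0:ℝ) ≤ φ t ^ 2)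
      rwa [mul_inv_cancel₀ (by positivity : (φ t ^ 2) ≠ 0)] at this
    have hsq : Real.sqrt (2 * c₀ * t) ^ 2 = 2 * c₀ * t := Real.sq_sqrt hA.le
    have hs : 0 < Real.sqrt (2 * c₀ * t) := Real.sqrt_pos.2 hA
    have h4 : φ t * Real.sqrt (2 * c₀ * t) ≤ 1 := by
      nlinarith [sq_nonneg (φ t * Real.sqrt (2 * c₀ * t) - 1), Real.sqrt_nonneg (2 * c₀ * t)]
    have h5 : (2 * c₀ * t) ^ (-(1 / 2) : ℝ) = (Real.sqrt (2 * c₀ * t))⁻¹ := by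
      rw [Real.rpow_neg hA.le, Real.sqrt_eq_rpow]
    rw [h5, inv_eq_one_div, le_div_iff₀ hs]
    exact h4
  · exfalso
    push_neg at hall
    obtain ⟨u, hu, hu0⟩ := hall
    set S : Set ℝ := Icc 0 t ∩ φ ⁻¹' (Iic 0) with hS
    have hclosed : IsClosed S := hcont.preimage_isClosed_of_isClosed isClosed_Icc isClosed_Iic
    have hScomp : IsCompact S := isCompact_Icc.of_isClosed_subset hclosed inter_subset_left
    have hSne : S.Nonempty := ⟨u, hu, hu0⟩
    set a : ℝ := sSup S with ha
    have haS : a ∈ S := hScomp.sSup_mem hSne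
    have ha0 : 0 ≤ a := haS.1.1
    have hat : a ≤ t := haS.1.2
    have hφa : φ a ≤ 0 := haS.2
    have hat' : a < t := lt_of_le_of_ne hat fun h => absurd hφt (not_lt.2 (h ▸ hφa))
    have hposafter : ∀ v, a < v → v ≤ t → 0 < φ v := by
      intro v hav hvt
      by_contra hneg
      push_neg at hneg
      have hvS : v ∈ S := ⟨⟨ha0.trans hav.le, hvt⟩, hneg⟩
      exact absurd (le_csSup hScomp.bddAbove hvS) (not_le.2 hav)
    -- pick s slightly to the right of a with φ s < φ t
    have hconta : ContinuousWithinAt φ (Icc 0 t) a := hcont a haS.1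
    rw [Metric.continuousWithinAt_iff] at hconta
    obtain ⟨ε, hε, hεp⟩ := hconta (φ t) hφt
    set s : ℝ := min (a + ε / 2) ((a + t) / 2) with hsdef
    have has : a < s := lt_min (by linarith) (by linarith)
    have hst : s < t := min_lt_of_right_lt (by linarith)
    have hs0 : 0 ≤ s := ha0.trans has.le
    have hsI : s ∈ Icc 0 t := ⟨hs0, hst.le⟩
    have hdsa : dist s a < ε := by
      rw [Real.dist_eq, abs_of_pos (by linarith : (0:ℝ) < s - a)]
      have : s ≤ a + ε / 2 := min_le_left _ _
      linarith
    have hφs : φ s < φ t := by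
      have := hεp hsI hdsa
      rw [Real.dist_eq] at this
      have := abs_lt.1 this
      linarith
    have hφspos : 0 < φ s := hposafter s has hst.le
    have hposI : ∀ v ∈ Icc s t, 0 < φ v := fun v hv =>
      hposafter v (lt_of_lt_of_le has hv.1) hv.2
    have h := main s hs0 hst.le hposI
    have hlt : (φ t ^ 2)⁻¹ < (φ s ^ 2)⁻¹ := by
      apply inv_strictAnti₀ (by positivity)
      nlinarith
    nlinarith
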